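/- Let κ and λ be odd nonzero integers and L = U(κ) ⊕ ⟨λ⟩. Then L' := { v ∈ L | ⟨v,v⟩ ≡ 0 mod 2 } is a sublattice of index 2 in L, isometric to U(κ) ⊕ ⟨4λ⟩, and every isometry of L restricts to an isometry of L'; moreover every isometry of L' extends to an isometry of L, so O(L) ≅ O(L'). -/
import Mathlib

open Matrix

/-- Parity lemma in `ZMod 2`: for an isometry matrix `h` of `U(κ) ⊕ ⟨4λ⟩`
(entries `a..i` mod 2), the entries `c = h 0 2` and `f = h 1 2` are even. -/
lemma stmt_5_key2 : ∀ a b c d e f g h i : ZMod 2,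
    a * f + d * c = 0 → b * f + e * c = 0 → c * f = 0 →
    a*e*i - a*f*h - b*d*i + b*f*g + c*d*h - c*e*g = 1 →
    c = 0 ∧ f = 0 := by decide

/-- Cancellation of congruence by a matrix with nonzero determinant. -/
lemma stmt_5_cancelB (B X Y : Matrix (Fin 3) (Fin 3) ℤ) (hB : B.det ≠ 0)
    (hXY : Bᵀ * X * B = Bᵀ * Y * B) : X = Y := by
  have h1 := congrArg (fun M => Bᵀ.adjugate * M * B.adjugate) hXY
  simp only [Matrix.mul_assoc] at h1
  simp only [Matrix.mul_adjugate, Matrix.mul_smul, Matrix.mul_one] at h1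
  simp only [← Matrix.mul_assoc, Matrix.adjugate_mul, Matrix.smul_mul,
    Matrix.one_mul, Matrix.det_transpose] at h1
  ext i j
  have h2 := congrFun (congrFun h1 i) j
  simp only [Matrix.smul_apply, smul_eq_mul] at h2
  exact mul_left_cancel₀ hB (mul_left_cancel₀ hB h2)

/-- Let `κ, λ` be odd nonzero integers and `L = U(κ) ⊕ ⟨λ⟩` (Gram matrix `Q`).
Then `L' = { v ∈ L | ⟨v,v⟩ even }` is a sublattice of index 2 (basis matrix `B`
with `det B = ±2`), isometric to `U(κ) ⊕ ⟨4λ⟩`; every isometry of `L` restricts to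
one of `L'`, and every isometry of `L'` extends to one of `L`, so `O(L) ≅ O(L')`. -/
theorem stmt_5 (κ lam : ℤ) (hκ : κ ≠ 0) (hlam : lam ≠ 0)
    (hκodd : Odd κ) (hlamodd : Odd lam) :
    ∃ B : Matrix (Fin 3) (Fin 3) ℤ,
      (∀ v : Fin 3 → ℤ,
        (2 ∣ v ⬝ᵥ ((!![0, κ, 0; κ, 0, 0; 0, 0, lam]).mulVec v)) ↔
        ∃ c : Fin 3 → ℤ, v = B.mulVec c) ∧
      (B.det = 2 ∨ B.det = -2) ∧
      Bᵀ * !![0, κ, 0; κ, 0, 0; 0, 0, lam] * B = !![0, κ, 0; κ, 0, 0; 0, 0, 4 * lam] ∧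
      (∀ g : Matrix (Fin 3) (Fin 3) ℤ, IsUnit g.det →
        gᵀ * !![0, κ, 0; κ, 0, 0; 0, 0, lam] * g = !![0, κ, 0; κ, 0, 0; 0, 0, lam] →
        ∃ h : Matrix (Fin 3) (Fin 3) ℤ, IsUnit h.det ∧
          hᵀ * !![0, κ, 0; κ, 0, 0; 0, 0, 4 * lam] * h =
            !![0, κ, 0; κ, 0, 0; 0, 0, 4 * lam] ∧
          g * B = B * h) ∧
      (∀ h : Matrix (Fin 3) (Fin 3) ℤ, IsUnit h.det →
        hᵀ * !![0, κ, 0; κ, 0, 0; 0, 0, 4 * lam] * h =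
          !![0, κ, 0; κ, 0, 0; 0, 0, 4 * lam] →
        ∃ g : Matrix (Fin 3) (Fin 3) ℤ, IsUnit g.det ∧
          gᵀ * !![0, κ, 0; κ, 0, 0; 0, 0, lam] * g = !![0, κ, 0; κ, 0, 0; 0, 0, lam] ∧
          g * B = B * h) := by
  have hκ2 : ((κ : ZMod 2)) = 1 := by
    obtain ⟨t, ht⟩ := hκodd
    rw [ht]; push_cast
    rw [show ((2 : ZMod 2)) = 0 from rfl]; ring
  refine ⟨!![1, 0, 0; 0, 1, 0; 0, 0, 2], ?_, ?_, ?_, ?_, ?_⟩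
  · -- characterization of the even sublattice
    intro v
    have hform : v ⬝ᵥ ((!![0, κ, 0; κ, 0, 0; 0, 0, lam]).mulVec v)
        = 2 * (κ * (v 0 * v 1)) + lam * (v 2 * v 2) := by
      simp [Matrix.mulVec, dotProduct, Fin.sum_univ_three, Matrix.vecHead,
        Matrix.vecTail]
      ring
    rw [hform]
    constructor
    · rintro ⟨k, hk⟩
      have hev : Even (lam * (v 2 * v 2)) := ⟨k - κ * (v 0 * v 1), by linarith⟩
      have hv2 : Even (v 2) := by
        rcases Int.even_mul.mp hev with h | h
        · exact absurd h (Int.not_even_iff_odd.mpr hlamodd)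
        · rcases Int.even_mul.mp h with h | h <;> exact h
      obtain ⟨m, hm⟩ := hv2
      refine ⟨![v 0, v 1, m], ?_⟩
      funext i
      fin_cases i <;>
        simp [Matrix.mulVec, dotProduct, Fin.sum_univ_three, Matrix.vecHead,
          Matrix.vecTail] <;> omega
    · rintro ⟨c, rfl⟩
      have h0 : (!![1, 0, 0; 0, 1, 0; 0, 0, 2] : Matrix (Fin 3) (Fin 3) ℤ).mulVec c 0
          = c 0 := by
        simp [Matrix.mulVec, dotProduct, Fin.sum_univ_three, Matrix.vecHead,
          Matrix.vecTail]
      have h1 : (!![1, 0, 0; 0, 1, 0; 0, 0, 2] : Matrix (Fin 3) (Fin 3) ℤ).mulVec c 1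
          = c 1 := by
        simp [Matrix.mulVec, dotProduct, Fin.sum_univ_three, Matrix.vecHead,
          Matrix.vecTail]
      have h2 : (!![1, 0, 0; 0, 1, 0; 0, 0, 2] : Matrix (Fin 3) (Fin 3) ℤ).mulVec c 2
          = 2 * c 2 := by
        simp [Matrix.mulVec, dotProduct, Fin.sum_univ_three, Matrix.vecHead,
          Matrix.vecTail]
      rw [h0, h1, h2]
      exact ⟨κ * (c 0 * c 1) + lam * (2 * (c 2 * c 2)), by ring⟩
  · left
    simp [Matrix.det_fin_three]
  · -- the Gram matrix of the sublattice
    have hBT : (!![1, 0, 0; 0, 1, 0; 0, 0, 2] : Matrix (Fin 3) (Fin 3) ℤ)ᵀ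
        = !![1, 0, 0; 0, 1, 0; 0, 0, 2] := by
      ext i j; fin_cases i <;> fin_cases j <;> rfl
    rw [hBT]
    norm_num [Matrix.mul_fin_three]
    ring
  · -- restriction of isometries
    have eQ : (!![1, 0, 0; 0, 1, 0; 0, 0, 2] : Matrix (Fin 3) (Fin 3) ℤ)ᵀ *
        !![0, κ, 0; κ, 0, 0; 0, 0, lam] * !![1, 0, 0; 0, 1, 0; 0, 0, 2]
        = !![0, κ, 0; κ, 0, 0; 0, 0, 4 * lam] := by
      have hBT : (!![1, 0, 0; 0, 1, 0; 0, 0, 2] : Matrix (Fin 3) (Fin 3) ℤ)ᵀ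
          = !![1, 0, 0; 0, 1, 0; 0, 0, 2] := by
        ext i j; fin_cases i <;> fin_cases j <;> rfl
      rw [hBT]
      norm_num [Matrix.mul_fin_three]
      ring
    intro g hg hQ
    set B : Matrix (Fin 3) (Fin 3) ℤ := !![1, 0, 0; 0, 1, 0; 0, 0, 2] with hB
    have hdB : B.det = 2 := by simp [hB, Matrix.det_fin_three]
    have e00 := congrFun (congrFun hQ 0) 0
    have e11 := congrFun (congrFun hQ 1) 1
    simp [Matrix.mul_apply, Fin.sum_univ_three] at e00 e11
    have hev20 : Even (g 2 0) := by
      have h1 : Even (lam * (g 2 0 * g 2 0)) :=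
        ⟨-(g 0 0 * κ * g 1 0), by linear_combination e00⟩
      rcases Int.even_mul.mp h1 with h | h
      · exact absurd h (Int.not_even_iff_odd.mpr hlamodd)
      · rcases Int.even_mul.mp h with h | h <;> exact h
    have hev21 : Even (g 2 1) := by
      have h1 : Even (lam * (g 2 1 * g 2 1)) :=
        ⟨-(g 0 1 * κ * g 1 1), by linear_combination e11⟩
      rcases Int.even_mul.mp h1 with h | h
      · exact absurd h (Int.not_even_iff_odd.mpr hlamodd)
      · rcases Int.even_mul.mp h with h | h <;> exact h
    obtain ⟨p, hp⟩ := hev20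
    obtain ⟨q, hq⟩ := hev21
    set h : Matrix (Fin 3) (Fin 3) ℤ :=
      !![g 0 0, g 0 1, 2 * g 0 2; g 1 0, g 1 1, 2 * g 1 2; p, q, g 2 2] with hh
    have hGB : g * B = B * h := by
      ext i j
      fin_cases i <;> fin_cases j <;>
        simp [hB, hh, Matrix.mul_apply, Fin.sum_univ_three, Matrix.vecHead,
          Matrix.vecTail] <;> omega
    have hdet : h.det = g.det := by
      have := congrArg Matrix.det hGB
      rw [Matrix.det_mul, Matrix.det_mul, hdB] at this
      linarith
    refine ⟨h, by rw [hdet]; exact hg, ?_, hGB⟩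
    calc hᵀ * !![0, κ, 0; κ, 0, 0; 0, 0, 4 * lam] * h
        = hᵀ * (Bᵀ * !![0, κ, 0; κ, 0, 0; 0, 0, lam] * B) * h := by rw [eQ]
      _ = (B * h)ᵀ * !![0, κ, 0; κ, 0, 0; 0, 0, lam] * (B * h) := by
          simp [Matrix.transpose_mul, Matrix.mul_assoc]
      _ = (g * B)ᵀ * !![0, κ, 0; κ, 0, 0; 0, 0, lam] * (g * B) := by rw [hGB]
      _ = Bᵀ * (gᵀ * !![0, κ, 0; κ, 0, 0; 0, 0, lam] * g) * B := by
          simp [Matrix.transpose_mul, Matrix.mul_assoc]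
      _ = Bᵀ * !![0, κ, 0; κ, 0, 0; 0, 0, lam] * B := by rw [hQ]
      _ = !![0, κ, 0; κ, 0, 0; 0, 0, 4 * lam] := eQ
  · -- extension of isometries
    have eQ : (!![1, 0, 0; 0, 1, 0; 0, 0, 2] : Matrix (Fin 3) (Fin 3) ℤ)ᵀ *
        !![0, κ, 0; κ, 0, 0; 0, 0, lam] * !![1, 0, 0; 0, 1, 0; 0, 0, 2]
        = !![0, κ, 0; κ, 0, 0; 0, 0, 4 * lam] := by
      have hBT : (!![1, 0, 0; 0, 1, 0; 0, 0, 2] : Matrix (Fin 3) (Fin 3) ℤ)ᵀ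
          = !![1, 0, 0; 0, 1, 0; 0, 0, 2] := by
        ext i j; fin_cases i <;> fin_cases j <;> rfl
      rw [hBT]
      norm_num [Matrix.mul_fin_three]
      ring
    intro h hdet hQ4
    set B : Matrix (Fin 3) (Fin 3) ℤ := !![1, 0, 0; 0, 1, 0; 0, 0, 2] with hB
    have hdB : B.det = 2 := by simp [hB, Matrix.det_fin_three]
    have e02 := congrFun (congrFun hQ4 0) 2
    have e12 := congrFun (congrFun hQ4 1) 2
    have e22 := congrFun (congrFun hQ4 2) 2
    simp [Matrix.mul_apply, Fin.sum_univ_three] at e02 e12 e22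
    have hevk : Even (κ * (h 0 2 * h 1 2)) := by
      refine ⟨lam * (1 - h 2 2 * h 2 2), mul_left_cancel₀ (two_ne_zero (α := ℤ)) ?_⟩
      linear_combination e22
    have hevcf : Even (h 0 2 * h 1 2) := by
      rcases Int.even_mul.mp hevk with hh | hh
      · exact absurd hh (Int.not_even_iff_odd.mpr hκodd)
      · exact hh
    -- pass to ZMod 2 and use the parity lemma
    have c1 : (h 0 0 : ZMod 2) * (h 1 2 : ZMod 2) + (h 1 0 : ZMod 2) * (h 0 2 : ZMod 2)
        = 0 := by
      have c := congrArg (fun z : ℤ => (z : ZMod 2)) e02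
      push_cast at c
      rw [hκ2, show ((4 : ZMod 2)) = 0 from rfl] at c
      linear_combination c
    have c2 : (h 0 1 : ZMod 2) * (h 1 2 : ZMod 2) + (h 1 1 : ZMod 2) * (h 0 2 : ZMod 2)
        = 0 := by
      have c := congrArg (fun z : ℤ => (z : ZMod 2)) e12
      push_cast at c
      rw [hκ2, show ((4 : ZMod 2)) = 0 from rfl] at c
      linear_combination c
    have c3 : (h 0 2 : ZMod 2) * (h 1 2 : ZMod 2) = 0 := by
      have := (ZMod.intCast_zmod_eq_zero_iff_dvd (h 0 2 * h 1 2) 2).mpr hevcf.two_dvd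
      push_cast at this; exact this
    have hd := Int.isUnit_iff.mp hdet
    rw [Matrix.det_fin_three] at hd
    have c4 : (h 0 0 : ZMod 2) * (h 1 1 : ZMod 2) * (h 2 2 : ZMod 2)
        - (h 0 0 : ZMod 2) * (h 1 2 : ZMod 2) * (h 2 1 : ZMod 2)
        - (h 0 1 : ZMod 2) * (h 1 0 : ZMod 2) * (h 2 2 : ZMod 2)
        + (h 0 1 : ZMod 2) * (h 1 2 : ZMod 2) * (h 2 0 : ZMod 2)
        + (h 0 2 : ZMod 2) * (h 1 0 : ZMod 2) * (h 2 1 : ZMod 2)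
        - (h 0 2 : ZMod 2) * (h 1 1 : ZMod 2) * (h 2 0 : ZMod 2) = 1 := by
      rcases hd with hd | hd
      · have c := congrArg (fun z : ℤ => (z : ZMod 2)) hd
        push_cast at c
        exact c
      · have c := congrArg (fun z : ℤ => (z : ZMod 2)) hd
        push_cast at c
        rw [show ((-1 : ZMod 2)) = 1 by decide] at c
        exact c
    obtain ⟨hc0, hf0⟩ := stmt_5_key2 (h 0 0) (h 0 1) (h 0 2) (h 1 0) (h 1 1) (h 1 2)
      (h 2 0) (h 2 1) (h 2 2) c1 c2 c3 c4
    have hdvd02 : (2 : ℤ) ∣ h 0 2 := (ZMod.intCast_zmod_eq_zero_iff_dvd (h 0 2) 2).mp hc0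
    have hdvd12 : (2 : ℤ) ∣ h 1 2 := (ZMod.intCast_zmod_eq_zero_iff_dvd (h 1 2) 2).mp hf0
    obtain ⟨c', hc'⟩ := hdvd02
    obtain ⟨f', hf'⟩ := hdvd12
    set g : Matrix (Fin 3) (Fin 3) ℤ :=
      !![h 0 0, h 0 1, c'; h 1 0, h 1 1, f'; 2 * h 2 0, 2 * h 2 1, h 2 2] with hg
    have hGB : g * B = B * h := by
      ext i j
      fin_cases i <;> fin_cases j <;>
        simp [hB, hg, Matrix.mul_apply, Fin.sum_univ_three, Matrix.vecHead,
          Matrix.vecTail] <;> omega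
    have hdetg : g.det = h.det := by
      have := congrArg Matrix.det hGB
      rw [Matrix.det_mul, Matrix.det_mul, hdB] at this
      linarith
    refine ⟨g, by rw [hdetg]; exact hdet, ?_, hGB⟩
    refine stmt_5_cancelB B _ _ (by rw [hdB]; norm_num) ?_
    calc Bᵀ * (gᵀ * !![0, κ, 0; κ, 0, 0; 0, 0, lam] * g) * B
        = (g * B)ᵀ * !![0, κ, 0; κ, 0, 0; 0, 0, lam] * (g * B) := by
          simp [Matrix.transpose_mul, Matrix.mul_assoc]
      _ = (B * h)ᵀ * !![0, κ, 0; κ, 0, 0; 0, 0, lam] * (B * h) := by rw [hGB]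
      _ = hᵀ * (Bᵀ * !![0, κ, 0; κ, 0, 0; 0, 0, lam] * B) * h := by
          simp [Matrix.transpose_mul, Matrix.mul_assoc]
      _ = hᵀ * !![0, κ, 0; κ, 0, 0; 0, 0, 4 * lam] * h := by rw [eQ]
      _ = !![0, κ, 0; κ, 0, 0; 0, 0, 4 * lam] := hQ4
      _ = Bᵀ * !![0, κ, 0; κ, 0, 0; 0, 0, lam] * B := eQ.symm
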